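/- Consider n ≥ 1 layers, with layer i containing l_i ≥ 1 families of null hypotheses. Let α ≥ 0 and let initial critical values α_{ij} ≥ 0 (1 ≤ i ≤ n, 1 ≤ j ≤ l_i) satisfy Σ_{i=1}^{n} Σ_{j=1}^{l_i} α_{ij} ≤ α. Let transition coefficients g_{klij} ∈ [0,1] satisfy g_{klij} = 0 whenever i ≤ k, and Σ_{i=k+1}^{n} Σ_{j=1}^{l_i} g_{klij} ≤ 1 for each (k,l). Define worst-case critical values recursively by ᾱ_{ij} = α_{ij} + Σ_{k<i} Σ_{l=1}^{l_k} (ᾱ_{kl} − t_{kl}) g_{klij}, where t_{ij} are reals with 0 ≤ t_{ij} ≤ ᾱ_{ij}. For each family (i,j) let E_{ij}(·) be a monotone family of measurable events with P(E_{ij}(x)) ≤ x for all x ≥ 0 and P(E_{ij}(ᾱ_{ij})) ≤ t_{ij}, and let α*_{ij} : Ω → ℝ be random critical values such that for every ω not belonging to any of the sets {ω : ω ∈ E_{kl}(α*_{kl}(ω))} with k < i, one has α*_{ij}(ω) ≤ ᾱ_{ij}; assume the sets {ω : ω ∈ E_{ij}(α*_{ij}(ω))} are measurable. Then the overall familywise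 error rate satisfies P(∪_{i=1}^{n} ∪_{j=1}^{l_i} {ω : ω ∈ E_{ij}(α*_{ij}(ω))}) ≤ Σ_{i=1}^{n} Σ_{j=1}^{l_i} α_{ij} ≤ α. -/

import Mathlib

open MeasureTheory

open Finset in
lemma sum_filter_lt_comm {M : Type*} [AddCommMonoid M] {n : ℕ}
    (f : Fin n → Fin n → M) :
    ∑ i : Fin n, ∑ k ∈ Finset.univ.filter (fun k => k < i), f i k
      = ∑ k : Fin n, ∑ i ∈ Finset.univ.filter (fun i => k < i), f i k := by
  simp_rw [Finset.sum_filter]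
  exact Finset.sum_comm

/-- Theorem 2 of the paper: overall FWER control of the general multi-layer
family-based graphical approach. -/
theorem multi_layer_family_based_FWER_control
    {Ω : Type*} [MeasurableSpace Ω] (P : Measure Ω) [IsProbabilityMeasure P]
    (n : ℕ) (hn : 1 ≤ n) (l : Fin n → ℕ) (hl : ∀ i, 1 ≤ l i)
    (α : ℝ) (hα : 0 ≤ α)
    (a : (i : Fin n) → Fin (l i) → ℝ) (ha : ∀ i j, 0 ≤ a i j)
    (hsum : ∑ i : Fin n, ∑ j : Fin (l i), a i j ≤ α)
    -- transition coefficients g k l' i j = g_{k l' i j}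
    (g : (k : Fin n) → Fin (l k) → (i : Fin n) → Fin (l i) → ℝ)
    (hg0 : ∀ k l' i j, 0 ≤ g k l' i j) (hg1 : ∀ k l' i j, g k l' i j ≤ 1)
    (hgzero : ∀ k l' i j, i ≤ k → g k l' i j = 0)
    (hgrow : ∀ k l', ∑ i ∈ Finset.univ.filter (fun i : Fin n => k < i),
      ∑ j : Fin (l i), g k l' i j ≤ 1)
    -- worst-case critical values, defined recursively
    (abar : (i : Fin n) → Fin (l i) → ℝ)
    (t : (i : Fin n) → Fin (l i) → ℝ)
    (habar : ∀ i j, abar i j = a i j +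
      ∑ k ∈ Finset.univ.filter (fun k : Fin n => k < i),
        ∑ l' : Fin (l k), (abar k l' - t k l') * g k l' i j)
    (ht0 : ∀ i j, 0 ≤ t i j) (htle : ∀ i j, t i j ≤ abar i j)
    -- monotone FWER-controlling families of events for each family
    (E : (i : Fin n) → Fin (l i) → ℝ → Set Ω)
    (hEmeas : ∀ i j x, MeasurableSet (E i j x))
    (hEmono : ∀ i j x y, x ≤ y → E i j x ⊆ E i j y)
    (hEFWER : ∀ i j x, 0 ≤ x → P (E i j x) ≤ ENNReal.ofReal x)
    (hEbar : ∀ i j, P (E i j (abar i j)) ≤ ENNReal.ofReal (t i j))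
    -- random critical values
    (αstar : (i : Fin n) → Fin (l i) → Ω → ℝ)
    (hαstar : ∀ i j ω,
      (∀ k : Fin n, k < i → ∀ l' : Fin (l k), ω ∉ E k l' (αstar k l' ω)) →
      αstar i j ω ≤ abar i j)
    (hSmeas : ∀ i j, MeasurableSet {ω | ω ∈ E i j (αstar i j ω)}) :
    P (⋃ i : Fin n, ⋃ j : Fin (l i), {ω | ω ∈ E i j (αstar i j ω)})
      ≤ ENNReal.ofReal (∑ i : Fin n, ∑ j : Fin (l i), a i j) ∧
    ENNReal.ofReal (∑ i : Fin n, ∑ j : Fin (l i), a i j) ≤ ENNReal.ofReal α := by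
 classical
  set S : (i : Fin n) → Fin (l i) → Set Ω :=
    fun i j => {ω | ω ∈ E i j (αstar i j ω)} with hS
  -- algebraic part: ∑ t ≤ ∑ a
  have hc0 : ∀ k l', 0 ≤ abar k l' - t k l' := fun k l' => sub_nonneg.mpr (htle k l')
  have hA : ∑ i : Fin n, ∑ j : Fin (l i), abar i j
      ≤ (∑ i : Fin n, ∑ j : Fin (l i), a i j)
        + ∑ k : Fin n, ∑ l' : Fin (l k), (abar k l' - t k l') := by
    have h1 : ∑ i : Fin n, ∑ j : Fin (l i), abar i j
        = (∑ i : Fin n, ∑ j : Fin (l i), a i j)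
          + ∑ k : Fin n, ∑ l' : Fin (l k), (abar k l' - t k l')
              * ∑ i ∈ Finset.univ.filter (fun i : Fin n => k < i),
                  ∑ j : Fin (l i), g k l' i j := by
      calc ∑ i : Fin n, ∑ j : Fin (l i), abar i j
          = ∑ i : Fin n, ∑ j : Fin (l i), (a i j +
              ∑ k ∈ Finset.univ.filter (fun k : Fin n => k < i),
                ∑ l' : Fin (l k), (abar k l' - t k l') * g k l' i j) :=
            Finset.sum_congr rfl fun i _ => Finset.sum_congr rfl fun j _ => habar i j
        _ = (∑ i : Fin n, ∑ j : Fin (l i), a i j)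
            + ∑ i : Fin n, ∑ j : Fin (l i),
                ∑ k ∈ Finset.univ.filter (fun k : Fin n => k < i),
                  ∑ l' : Fin (l k), (abar k l' - t k l') * g k l' i j := by
            rw [← Finset.sum_add_distrib]
            exact Finset.sum_congr rfl fun i _ => Finset.sum_add_distrib
        _ = (∑ i : Fin n, ∑ j : Fin (l i), a i j)
            + ∑ i : Fin n,
                ∑ k ∈ Finset.univ.filter (fun k : Fin n => k < i),
                  ∑ l' : Fin (l k), (abar k l' - t k l') * ∑ j : Fin (l i), g k l' i j := by
            congr 1
            refine Finset.sum_congr rfl fun i _ => ?_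
            rw [Finset.sum_comm]
            refine Finset.sum_congr rfl fun k _ => ?_
            rw [Finset.sum_comm]
            exact Finset.sum_congr rfl fun l' _ => (Finset.mul_sum _ _ _).symm
        _ = (∑ i : Fin n, ∑ j : Fin (l i), a i j)
            + ∑ k : Fin n, ∑ l' : Fin (l k), (abar k l' - t k l')
                * ∑ i ∈ Finset.univ.filter (fun i : Fin n => k < i),
                    ∑ j : Fin (l i), g k l' i j := by
            congr 1
            rw [sum_filter_lt_comm
              (fun i k => ∑ l' : Fin (l k), (abar k l' - t k l') * ∑ j : Fin (l i), g k l' i j)]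
            refine Finset.sum_congr rfl fun k _ => ?_
            rw [Finset.sum_comm]
            refine Finset.sum_congr rfl fun l' _ => ?_
            exact (Finset.mul_sum _ _ _).symm
    rw [h1]
    gcongr with k _ l' _
    exact mul_le_of_le_one_right (hc0 k l') (hgrow k l')
  have htsum : ∑ i : Fin n, ∑ j : Fin (l i), t i j
      ≤ ∑ i : Fin n, ∑ j : Fin (l i), a i j := by
    have : ∑ k : Fin n, ∑ l' : Fin (l k), (abar k l' - t k l')
        = (∑ i : Fin n, ∑ j : Fin (l i), abar i j)
          - ∑ i : Fin n, ∑ j : Fin (l i), t i j := by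
      rw [← Finset.sum_sub_distrib]
      exact Finset.sum_congr rfl fun i _ => Finset.sum_sub_distrib _ _
    rw [this] at hA
    linarith
  -- measure part
  have hsub : (⋃ i : Fin n, ⋃ j : Fin (l i), S i j)
      ⊆ ⋃ i : Fin n, ⋃ j : Fin (l i), E i j (abar i j) := by
    intro ω hω
    simp only [Set.mem_iUnion] at hω
    have hex : ∃ m : ℕ, ∃ h : m < n, ∃ j : Fin (l ⟨m, h⟩), ω ∈ S ⟨m, h⟩ j := by
      obtain ⟨i, j, hij⟩ := hω
      exact ⟨i.1, i.2, by simpa using ⟨j, hij⟩⟩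
    obtain ⟨hm, j, hj⟩ := Nat.find_spec hex
    have hmin : ∀ k : Fin n, k < ⟨Nat.find hex, hm⟩ → ∀ l' : Fin (l k), ω ∉ S k l' :=
      fun k hk l' hkl => Nat.find_min hex hk ⟨k.2, l', hkl⟩
    simp only [Set.mem_iUnion]
    exact ⟨⟨Nat.find hex, hm⟩, j, hEmono _ _ _ _ (hαstar _ j ω hmin) hj⟩
  refine ⟨?_, ENNReal.ofReal_le_ofReal hsum⟩
  calc P (⋃ i : Fin n, ⋃ j : Fin (l i), S i j)
      ≤ P (⋃ i : Fin n, ⋃ j : Fin (l i), E i j (abar i j)) := measure_mono hsub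
    _ ≤ ∑ i : Fin n, P (⋃ j : Fin (l i), E i j (abar i j)) := measure_iUnion_fintype_le _ _
    _ ≤ ∑ i : Fin n, ∑ j : Fin (l i), P (E i j (abar i j)) :=
        Finset.sum_le_sum fun i _ => measure_iUnion_fintype_le _ _
    _ ≤ ∑ i : Fin n, ∑ j : Fin (l i), ENNReal.ofReal (t i j) :=
        Finset.sum_le_sum fun i _ => Finset.sum_le_sum fun j _ => hEbar i j
    _ = ENNReal.ofReal (∑ i : Fin n, ∑ j : Fin (l i), t i j) := by
        rw [ENNReal.ofReal_sum_of_nonneg fun i _ => Finset.sum_nonneg fun j _ => ht0 i j]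
        exact Finset.sum_congr rfl fun i _ =>
          (ENNReal.ofReal_sum_of_nonneg fun j _ => ht0 i j).symm
    _ ≤ ENNReal.ofReal (∑ i : Fin n, ∑ j : Fin (l i), a i j) :=
        ENNReal.ofReal_le_ofReal htsum
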